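/- Let f(x) = Σ_{i≥0} aᵢxⁱ be a power series with Σᵢ|aᵢ| < ∞ and suppose there exists ε > 0 such that |a_{i+1}|/|aᵢ| > ε for all but finitely many i ∈ ℕ. Then the set of nonempty compact sets K ⊆ [0,1] for which f(K) = Σ_{i≥0} aᵢ·K^{⊙i} has empty interior is meager in 𝒦([0,1]). -/

import Mathlib

open Pointwise

/-- The space of nonempty compact subsets of `[0,1]`, with the Hausdorff metric topology. -/
def KIcc : Type := {K : TopologicalSpace.NonemptyCompacts ℝ // (K : Set ℝ) ⊆ Set.Icc 0 1}

instance : TopologicalSpace KIcc := instTopologicalSpaceSubtype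

namespace MeagerEmptyInteriorAux

open Metric Filter TopologicalSpace

/-- Tail sums of a sequence. -/
noncomputable def tail (f : ℕ → ℝ) (n : ℕ) : ℝ := ∑' j, f (j + n)

lemma tail_succ {f : ℕ → ℝ} (hf : Summable f) (n : ℕ) :
    tail f n = f n + tail f (n + 1) := by
  have h1 : Summable fun j => f (j + n) := (summable_nat_add_iff n).2 hf
  have h2 := Summable.tsum_eq_zero_add h1
  simp only [zero_add] at h2
  rw [tail, h2, tail]
  congr 1
  exact tsum_congr fun j => congrArg f (by omega)

lemma tail_zero (f : ℕ → ℝ) : tail f 0 = ∑' j, f j :=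
  tsum_congr fun j => congrArg f (by omega)

lemma tail_tendsto (f : ℕ → ℝ) : Filter.Tendsto (tail f) Filter.atTop (nhds 0) :=
  tendsto_sum_nat_add f

/-- The greedy selection lemma: given sets `A n` with prescribed endpoints and
small gaps relative to the total size of the following sets, every point of the
appropriate interval is a limit of partial sums of selections. -/
lemma greedy (A : ℕ → Set ℝ) (σ τ g : ℕ → ℝ)
    (hσA : ∀ n, σ n ∈ A n) (hτA : ∀ n, τ n ∈ A n)
    (hSs : Summable σ) (hSt : Summable τ)
    (hdense : ∀ n u, σ n ≤ u → u + g n ≤ τ n → ∃ x ∈ A n, u ≤ x ∧ x ≤ u + g n)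
    (hgT : ∀ n, g n ≤ tail τ (n + 1) - tail σ (n + 1))
    (t : ℝ) (hlo : tail σ 0 ≤ t) (hhi : t ≤ tail τ 0) :
    ∃ x : ℕ → ℝ, (∀ n, x n ∈ A n) ∧
      Filter.Tendsto (fun n => ∑ i ∈ Finset.range n, x i) Filter.atTop (nhds t) := by
  have key : ∀ n r, tail σ n ≤ r → r ≤ tail τ n →
      ∃ x, x ∈ A n ∧ tail σ (n+1) ≤ r - x ∧ r - x ≤ tail τ (n+1) := by
    intro n r h1 h2
    rw [tail_succ hSs] at h1
    rw [tail_succ hSt] at h2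
    have hT := hgT n
    by_cases hc1 : τ n ≤ r - tail σ (n+1)
    · exact ⟨τ n, hτA n, by linarith, by linarith⟩
    by_cases hc2 : r - tail τ (n+1) ≤ σ n
    · push_neg at hc1
      exact ⟨σ n, hσA n, by linarith, by linarith⟩
    · push_neg at hc1 hc2
      obtain ⟨x, hxA, hx1, hx2⟩ := hdense n (r - tail τ (n+1)) (le_of_lt hc2)
        (by linarith)
      exact ⟨x, hxA, by linarith, by linarith⟩
  obtain ⟨R, hR0, hRstep⟩ :
      ∃ R : ∀ n : ℕ, {r : ℝ // tail σ n ≤ r ∧ r ≤ tail τ n},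
        (R 0).1 = t ∧ ∀ n, (R (n+1)).1 =
          (R n).1 - Classical.choose (key n (R n).1 (R n).2.1 (R n).2.2) := by
    refine ⟨fun n => Nat.rec ⟨t, hlo, hhi⟩
      (fun k ih => ⟨ih.1 - Classical.choose (key k ih.1 ih.2.1 ih.2.2),
        (Classical.choose_spec (key k ih.1 ih.2.1 ih.2.2)).2.1,
        (Classical.choose_spec (key k ih.1 ih.2.1 ih.2.2)).2.2⟩) n, rfl, fun n => rfl⟩
  set x : ℕ → ℝ := fun n => Classical.choose (key n (R n).1 (R n).2.1 (R n).2.2) with hx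
  have hxA : ∀ n, x n ∈ A n := fun n =>
    (Classical.choose_spec (key n (R n).1 (R n).2.1 (R n).2.2)).1
  have hsum : ∀ n, ∑ i ∈ Finset.range n, x i = t - (R n).1 := by
    intro n
    induction n with
    | zero => simp [hR0]
    | succ k ih => rw [Finset.sum_range_succ, ih, hRstep k]; ring
  have hRlim : Filter.Tendsto (fun n => (R n).1) Filter.atTop (nhds 0) :=
    tendsto_of_tendsto_of_tendsto_of_le_of_le (tail_tendsto σ) (tail_tendsto τ)
      (fun n => (R n).2.1) (fun n => (R n).2.2)
  refine ⟨x, hxA, ?_⟩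
  have h2 : Filter.Tendsto (fun n => t - (R n).1) Filter.atTop (nhds (t - 0)) :=
    tendsto_const_nhds.sub hRlim
  simp only [sub_zero] at h2
  simpa only [hsum] using h2

/-- Scaling a set with a gap bound. -/
lemma scaled_dense {D : Set ℝ} {sg tg gD : ℝ} (hst : sg ≤ tg) (hsD : sg ∈ D)
    (hg : 0 ≤ gD)
    (hd : ∀ u, sg ≤ u → u + gD ≤ tg → ∃ x ∈ D, u ≤ x ∧ x ≤ u + gD) (l : ℝ) :
    ∀ u, min (l*sg) (l*tg) ≤ u → u + |l| * gD ≤ max (l*sg) (l*tg) →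
      ∃ x ∈ l • D, u ≤ x ∧ x ≤ u + |l| * gD := by
  intro u hu1 hu2
  rcases lt_trichotomy l 0 with hl|hl|hl
  · rw [abs_of_neg hl] at hu2 ⊢
    rw [min_eq_right (mul_le_mul_of_nonpos_left hst hl.le)] at hu1
    rw [max_eq_left (mul_le_mul_of_nonpos_left hst hl.le)] at hu2
    have hlne : l ≠ 0 := ne_of_lt hl
    have hw : l * ((u + -l*gD)/l) = u + -l*gD := by field_simp
    obtain ⟨x, hxD, hx1, hx2⟩ := hd ((u + -l*gD)/l)
      ((le_div_iff_of_neg hl).2 (by linarith))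
      (by
        have h5 : (u + -l*gD)/l ≤ tg - gD := by
          rw [div_le_iff_of_neg hl]
          nlinarith
        linarith)
    have h3 := mul_le_mul_of_nonpos_left hx2 hl.le
    have h4 := mul_le_mul_of_nonpos_left hx1 hl.le
    have hexp : l * ((u + -l*gD)/l + gD) = u := by
      rw [mul_add, hw]; ring
    refine ⟨l * x, ?_, by linarith, by linarith⟩
    exact Set.smul_mem_smul_set hxD
  · subst hl
    simp only [zero_mul, min_self, max_self, abs_zero] at hu1 hu2 ⊢
    refine ⟨(0:ℝ) * sg, Set.smul_mem_smul_set hsD, by linarith, by linarith⟩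
  · rw [abs_of_pos hl] at hu2 ⊢
    rw [min_eq_left (mul_le_mul_of_nonneg_left hst hl.le)] at hu1
    rw [max_eq_right (mul_le_mul_of_nonneg_left hst hl.le)] at hu2
    have hlne : l ≠ 0 := ne_of_gt hl
    have hw : l * (u/l) = u := by field_simp
    obtain ⟨x, hxD, hx1, hx2⟩ := hd (u/l)
      ((le_div_iff₀ hl).2 (by linarith))
      (by
        have h5 : u/l ≤ tg - gD := by
          rw [div_le_iff₀ hl]
          nlinarith
        linarith)
    have h3 := mul_le_mul_of_nonneg_left hx1 hl.le
    have h4 := mul_le_mul_of_nonneg_left hx2 hl.le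
    have hexp : l * (u/l + gD) = u + l*gD := by
      rw [mul_add, hw]
    refine ⟨l * x, ?_, by linarith, by linarith⟩
    exact Set.smul_mem_smul_set hxD

lemma pow_subset_Icc {S : Set ℝ} (hS : S ⊆ Set.Icc 0 1) : ∀ n, S ^ n ⊆ Set.Icc 0 1 := by
  intro n
  induction n with
  | zero =>
    intro x hx
    rw [pow_zero, Set.mem_one] at hx
    subst hx
    exact ⟨zero_le_one, le_refl 1⟩
  | succ k ih =>
    intro x hx
    rw [pow_succ] at hx
    obtain ⟨y, hy, z, hz, rfl⟩ := hx
    have hy' := ih hy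
    have hz' := hS hz
    exact ⟨mul_nonneg hy'.1 hz'.1, mul_le_one₀ hy'.2 hz'.1 hz'.2⟩

lemma sum_sets_mem {T : ℕ → Set ℝ} {x : ℕ → ℝ} (hx : ∀ i, x i ∈ T i) (n : ℕ) :
    (∑ i ∈ Finset.range n, x i) ∈ ∑ i ∈ Finset.range n, T i := by
  induction n with
  | zero => simp
  | succ k ih =>
    rw [Finset.sum_range_succ, Finset.sum_range_succ]
    exact Set.add_mem_add ih (hx k)

lemma sum_sets_bounded {K : Set ℝ} (hK : K ⊆ Set.Icc 0 1) (a : ℕ → ℝ) (n : ℕ) :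
    ∀ y ∈ ∑ i ∈ Finset.range n, a i • (K ^ i), |y| ≤ ∑ i ∈ Finset.range n, |a i| := by
  induction n with
  | zero =>
    intro y hy
    simp only [Finset.range_zero, Finset.sum_empty] at hy ⊢
    rw [Set.mem_zero] at hy
    simp [hy]
  | succ k ih =>
    intro y hy
    rw [Finset.sum_range_succ] at hy
    obtain ⟨u, hu, v, hv, rfl⟩ := Set.mem_add.1 hy
    obtain ⟨q, hq, rfl⟩ := hv
    have hq' := pow_subset_Icc hK k hq
    have h1 := ih u hu
    have h2 : |a k • q| ≤ |a k| := by
      rw [smul_eq_mul, abs_mul]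
      have hq1 : |q| ≤ 1 := abs_le.2 ⟨by linarith [hq'.1], hq'.2⟩
      nlinarith [abs_nonneg (a k)]
    rw [Finset.sum_range_succ]
    calc |u + a k • q| ≤ |u| + |a k • q| := abs_add_le _ _
    _ ≤ _ := by linarith

/-- The open condition defining the dense open set. -/
def Cond (ε c m δ : ℝ) (L : Set ℝ) : Prop :=
  0 < δ ∧ 0 < c ∧ c + 3*δ ≤ m ∧ m ≤ 1 ∧ 6*δ ≤ ε*(m-δ)*(m-c-2*δ) ∧
  (∃ k ∈ L, k ∈ Set.Ioo (m-δ) (m+δ)) ∧ Set.Icc c m ⊆ Metric.thickening δ L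


lemma sound (a : ℕ → ℝ) (hsum : Summable (fun i => |a i|)) (ε : ℝ) (hε : 0 < ε)
    (N : ℕ) (hN : 1 ≤ N) (hrat : ∀ i, N ≤ i → ε < |a (i+1)| / |a i|)
    (c m δ : ℝ) (K : Set ℝ) (hK1 : K ⊆ Set.Icc 0 1) (hKne : K.Nonempty)
    (hcond : Cond ε c m δ K)
    (F : Set ℝ) (hFc : IsCompact F) (hFne : F.Nonempty)
    (hT : Filter.Tendsto
      (fun n => Metric.hausdorffDist (∑ i ∈ Finset.range n, a i • (K ^ i)) F)
      Filter.atTop (nhds 0)) :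
    (interior F).Nonempty := by
  classical
  obtain ⟨hδ, hc, hcm, hm1, hkey, ⟨mstar, hmK, hms⟩, hthick⟩ := hcond
  obtain ⟨hms1, hms2⟩ := hms
  -- basic facts about the ratio hypothesis
  have hane : ∀ i, N ≤ i → a i ≠ 0 := by
    intro i hi h0
    have := hrat i hi
    rw [h0, abs_zero, div_zero] at this
    linarith
  have hgrow : ∀ i, N ≤ i → ε * |a i| ≤ |a (i+1)| := by
    intro i hi
    have h1 := hrat i hi
    have h2 : 0 < |a i| := abs_pos.2 (hane i hi)
    exact le_of_lt ((lt_div_iff₀ h2).1 h1)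
  -- the point mstar of K near m and the point kc of K near c
  have hms_le1 : mstar ≤ 1 := (hK1 hmK).2
  have hms_pos : 0 < mstar := by linarith
  have hcIcc : c ∈ Set.Icc c m := ⟨le_refl c, by linarith⟩
  obtain ⟨kc, hkcK, hkcd⟩ := Metric.mem_thickening_iff.1 (hthick hcIcc)
  rw [Real.dist_eq] at hkcd
  obtain ⟨hkc1, hkc2⟩ := abs_lt.1 hkcd
  have hkc0 : 0 ≤ kc := (hK1 hkcK).1
  have hkc_le : kc ≤ mstar := by linarith
  have hDd_pos : 0 < mstar - kc := by linarith
  -- the set D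
  set D : Set ℝ := (K ∩ Set.Icc kc mstar) ∪ {mstar} with hD
  have hkcD : kc ∈ D := Or.inl ⟨hkcK, le_refl kc, hkc_le⟩
  have hmsD : mstar ∈ D := Or.inr rfl
  have hDK : D ⊆ K := by
    rintro x (⟨hxK, _⟩|rfl)
    · exact hxK
    · exact hmK
  have hDsub : D ⊆ Set.Icc kc mstar := by
    rintro x (⟨_, hx⟩|hx)
    · exact hx
    · rw [Set.mem_singleton_iff] at hx
      rw [hx]
      exact ⟨hkc_le, le_rfl⟩
  have hDgap : ∀ u, kc ≤ u → u + 6*δ ≤ mstar → ∃ x ∈ D, u ≤ x ∧ x ≤ u + 6*δ := by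
    intro u hu1 hu2
    have hy : u + 2*δ ∈ Set.Icc c m := ⟨by linarith, by linarith⟩
    obtain ⟨z, hzK, hdz⟩ := Metric.mem_thickening_iff.1 (hthick hy)
    rw [Real.dist_eq] at hdz
    obtain ⟨hz1, hz2⟩ := abs_lt.1 hdz
    refine ⟨z, Or.inl ⟨hzK, by linarith, by linarith⟩, by linarith, by linarith⟩
  -- choice of points in the small-index sets
  have hpne : ∀ i, (a i • (K ^ i)).Nonempty := fun i => (hKne.pow).smul_set
  choose p hp using hpne
  have hpbd : ∀ i, |p i| ≤ |a i| := by
    intro i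
    obtain ⟨q, hq, hpq⟩ := Set.mem_smul_set.1 (hp i)
    have hq' := pow_subset_Icc hK1 i hq
    rw [← hpq, smul_eq_mul, abs_mul]
    have : |q| ≤ 1 := abs_le.2 ⟨by linarith [hq'.1], hq'.2⟩
    nlinarith [abs_nonneg (a i)]
  -- the scaling factors
  set lam : ℕ → ℝ := fun i => a i * mstar ^ (i - 1) with hlam
  have hlam_abs : ∀ i, |lam i| = |a i| * mstar ^ (i - 1) := by
    intro i
    rw [hlam, abs_mul, abs_of_nonneg (pow_nonneg hms_pos.le _)]
  have hlam_le : ∀ i, |lam i| ≤ |a i| := by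
    intro i
    rw [hlam_abs i]
    nlinarith [pow_le_one₀ hms_pos.le hms_le1 (n := i - 1), abs_nonneg (a i),
      pow_nonneg hms_pos.le (i - 1)]
  -- the sequences for the greedy lemma
  set A : ℕ → Set ℝ := fun i => if i < N then {p i} else lam i • D with hA
  set σ : ℕ → ℝ := fun i => if i < N then p i else min (lam i * kc) (lam i * mstar) with hσ
  set τ : ℕ → ℝ := fun i => if i < N then p i else max (lam i * kc) (lam i * mstar) with hτ
  set g : ℕ → ℝ := fun i => if i < N then 0 else |lam i| * (6*δ) with hg
  have hστ_le : ∀ i, σ i ≤ τ i := by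
    intro i
    by_cases h : i < N
    · simp [hσ, hτ, h]
    · simp only [hσ, hτ, if_neg h]
      exact min_le_max
  have hσA : ∀ i, σ i ∈ A i := by
    intro i
    by_cases h : i < N
    · simp [hσ, hA, h]
    · simp only [hσ, hA, if_neg h]
      rcases min_choice (lam i * kc) (lam i * mstar) with h1|h1 <;> rw [h1]
      · exact Set.smul_mem_smul_set hkcD
      · exact Set.smul_mem_smul_set hmsD
  have hτA : ∀ i, τ i ∈ A i := by
    intro i
    by_cases h : i < N
    · simp [hτ, hA, h]
    · simp only [hτ, hA, if_neg h]
      rcases max_choice (lam i * kc) (lam i * mstar) with h1|h1 <;> rw [h1]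
      · exact Set.smul_mem_smul_set hkcD
      · exact Set.smul_mem_smul_set hmsD
  have hσbd : ∀ i, |σ i| ≤ |a i| := by
    intro i
    by_cases h : i < N
    · simp only [hσ, if_pos h]; exact hpbd i
    · simp only [hσ, if_neg h]
      refine le_trans (abs_min_le_max_abs_abs) (max_le ?_ ?_) <;>
        rw [abs_mul] <;>
        [skip; skip] <;> skip
      · calc |lam i| * |kc| ≤ |lam i| * 1 := by
              apply mul_le_mul_of_nonneg_left _ (abs_nonneg _)
              rw [abs_of_nonneg hkc0]
              exact (hK1 hkcK).2
        _ = |lam i| := mul_one _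
        _ ≤ |a i| := hlam_le i
      · calc |lam i| * |mstar| ≤ |lam i| * 1 := by
              apply mul_le_mul_of_nonneg_left _ (abs_nonneg _)
              rw [abs_of_nonneg hms_pos.le]
              exact hms_le1
        _ = |lam i| := mul_one _
        _ ≤ |a i| := hlam_le i
  have hτbd : ∀ i, |τ i| ≤ |a i| := by
    intro i
    by_cases h : i < N
    · simp only [hτ, if_pos h]; exact hpbd i
    · simp only [hτ, if_neg h]
      refine le_trans (abs_max_le_max_abs_abs) (max_le ?_ ?_) <;> rw [abs_mul]
      · calc |lam i| * |kc| ≤ |lam i| * 1 := by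
              apply mul_le_mul_of_nonneg_left _ (abs_nonneg _)
              rw [abs_of_nonneg hkc0]
              exact (hK1 hkcK).2
        _ = |lam i| := mul_one _
        _ ≤ |a i| := hlam_le i
      · calc |lam i| * |mstar| ≤ |lam i| * 1 := by
              apply mul_le_mul_of_nonneg_left _ (abs_nonneg _)
              rw [abs_of_nonneg hms_pos.le]
              exact hms_le1
        _ = |lam i| := mul_one _
        _ ≤ |a i| := hlam_le i
  have hSs : Summable σ :=
    Summable.of_norm_bounded hsum
      (fun i => by rw [Real.norm_eq_abs]; exact hσbd i)
  have hSt : Summable τ :=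
    Summable.of_norm_bounded hsum
      (fun i => by rw [Real.norm_eq_abs]; exact hτbd i)
  have hdiff_eq : ∀ i, ¬(i < N) → τ i - σ i = |lam i| * (mstar - kc) := by
    intro i h
    simp only [hσ, hτ, if_neg h]
    rcases le_total 0 (lam i) with h1|h1
    · rw [max_eq_right (mul_le_mul_of_nonneg_left hkc_le h1),
        min_eq_left (mul_le_mul_of_nonneg_left hkc_le h1), abs_of_nonneg h1]
      ring
    · rw [max_eq_left (mul_le_mul_of_nonpos_left hkc_le h1),
        min_eq_right (mul_le_mul_of_nonpos_left hkc_le h1), abs_of_nonpos h1]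
      ring
  -- key quantitative inequality
  have hkey2 : 6*δ ≤ ε * mstar * (mstar - kc) := by
    have h1 : (m - δ) * (m - c - 2*δ) ≤ mstar * (mstar - kc) := by
      apply mul_le_mul (by linarith) (by linarith) (by linarith) (by linarith)
    nlinarith
  have hgT : ∀ i, g i ≤ tail τ (i + 1) - tail σ (i + 1) := by
    intro i
    have hsτ : Summable fun j => τ (j + (i+1)) := (summable_nat_add_iff (i+1)).2 hSt
    have hsσ : Summable fun j => σ (j + (i+1)) := (summable_nat_add_iff (i+1)).2 hSs
    have htail : tail τ (i+1) - tail σ (i+1) = ∑' j, (τ (j + (i+1)) - σ (j + (i+1))) :=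
      (Summable.tsum_sub hsτ hsσ).symm
    by_cases h : i < N
    · simp only [hg, if_pos h]
      rw [htail]
      exact tsum_nonneg (fun j => sub_nonneg.2 (hστ_le _))
    · simp only [hg, if_neg h]
      push_neg at h
      rw [htail]
      have hterm : τ (0 + (i+1)) - σ (0 + (i+1)) ≤ ∑' j, (τ (j + (i+1)) - σ (j + (i+1))) :=
        Summable.le_tsum (hsτ.sub hsσ) 0 (fun j _ => sub_nonneg.2 (hστ_le _))
      simp only [zero_add] at hterm
      have hnot : ¬(i + 1 < N) := by omega
      rw [hdiff_eq (i+1) hnot] at hterm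
      refine le_trans ?_ hterm
      -- |lam i| * (6δ) ≤ |lam (i+1)| * (mstar - kc)
      have hi1 : i - 1 + 1 = i := by omega
      have hpow_nonneg : (0:ℝ) ≤ mstar ^ (i-1) := pow_nonneg hms_pos.le _
      have hA1 : ε * |a i| ≤ |a (i+1)| := hgrow i h
      calc |lam i| * (6*δ) = |a i| * mstar^(i-1) * (6*δ) := by rw [hlam_abs i]
      _ ≤ |a i| * mstar^(i-1) * (ε*mstar*(mstar - kc)) := by
            apply mul_le_mul_of_nonneg_left hkey2 (by positivity)
      _ = (ε * |a i|) * (mstar^(i-1) * mstar) * (mstar - kc) := by ring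
      _ = (ε * |a i|) * mstar^i * (mstar - kc) := by rw [← pow_succ, hi1]
      _ ≤ |a (i+1)| * mstar^i * (mstar - kc) := by
            apply mul_le_mul_of_nonneg_right
              (mul_le_mul_of_nonneg_right hA1 (pow_nonneg hms_pos.le i)) hDd_pos.le
      _ = |lam (i+1)| * (mstar - kc) := by
            rw [hlam_abs (i+1)]
            norm_num
  have hdense : ∀ i u, σ i ≤ u → u + g i ≤ τ i → ∃ x ∈ A i, u ≤ x ∧ x ≤ u + g i := by
    intro i u h1 h2
    by_cases h : i < N
    · simp only [hσ, hτ, hg, if_pos h] at h1 h2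
      simp only [hA, hg, if_pos h]
      exact ⟨p i, Set.mem_singleton _, by linarith, by linarith⟩
    · simp only [hσ, hτ, hg, if_neg h] at h1 h2
      simp only [hA, hg, if_neg h]
      exact scaled_dense (gD := 6*δ) hkc_le hkcD (by linarith) hDgap (lam i) u h1 h2
  have hAsub : ∀ i, A i ⊆ a i • (K ^ i) := by
    intro i
    by_cases h : i < N
    · simp only [hA, if_pos h]
      intro x hx
      rw [Set.mem_singleton_iff] at hx
      subst hx
      exact hp i
    · simp only [hA, if_neg h]
      push_neg at h
      rintro x ⟨d, hd, rfl⟩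
      have h1 : mstar ^ (i-1) ∈ K ^ (i-1) := Set.pow_mem_pow hmK
      have h2 : mstar ^ (i-1) * d ∈ K ^ (i-1) * K := Set.mul_mem_mul h1 (hDK hd)
      have h3 : K ^ (i-1) * K = K ^ i := by
        rw [← pow_succ]
        congr 1
        omega
      rw [h3] at h2
      refine ⟨mstar ^ (i-1) * d, h2, ?_⟩
      simp only [smul_eq_mul, hlam]
      ring
  -- the interval
  set lo : ℝ := tail σ 0 with hlo_def
  set hi : ℝ := tail τ 0 with hhi_def
  have hlam_N_pos : 0 < |lam N| := by
    rw [hlam_abs N]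
    have := abs_pos.2 (hane N (le_refl N))
    positivity
  have hlt : lo < hi := by
    have h1 : hi - lo = ∑' j, (τ j - σ j) := by
      rw [hlo_def, hhi_def, tail_zero, tail_zero]
      exact (Summable.tsum_sub hSt hSs).symm
    have h2 : τ N - σ N ≤ ∑' j, (τ j - σ j) :=
      Summable.le_tsum (hSt.sub hSs) N (fun j _ => sub_nonneg.2 (hστ_le _))
    have h3 : τ N - σ N = |lam N| * (mstar - kc) := hdiff_eq N (by omega)
    nlinarith [mul_pos hlam_N_pos hDd_pos]
  -- every point of [lo, hi] lies in F
  have hIcc : Set.Icc lo hi ⊆ F := by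
    intro t ht
    obtain ⟨x, hxA, hxt⟩ := greedy A σ τ g hσA hτA hSs hSt hdense hgT t ht.1 ht.2
    set S : ℕ → Set ℝ := fun n => ∑ i ∈ Finset.range n, a i • (K ^ i) with hS
    have hs : ∀ n, (∑ i ∈ Finset.range n, x i) ∈ S n :=
      fun n => sum_sets_mem (fun i => hAsub i (hxA i)) n
    have hSb : ∀ n, Bornology.IsBounded (S n) := by
      intro n
      apply (Metric.isBounded_Icc (-(∑ i ∈ Finset.range n, |a i|))
        (∑ i ∈ Finset.range n, |a i|)).subset
      intro y hy
      exact abs_le.1 (sum_sets_bounded hK1 a n y hy)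
    have hed : ∀ n, EMetric.hausdorffEdist (S n) F ≠ ⊤ := fun n =>
      Metric.hausdorffEdist_ne_top_of_nonempty_of_bounded ⟨_, hs n⟩ hFne (hSb n)
        hFc.isBounded
    have hineq : ∀ n, Metric.infDist t F ≤
        dist t (∑ i ∈ Finset.range n, x i) + Metric.hausdorffDist (S n) F := by
      intro n
      calc Metric.infDist t F
          ≤ Metric.infDist (∑ i ∈ Finset.range n, x i) F
            + dist t (∑ i ∈ Finset.range n, x i) := Metric.infDist_le_infDist_add_dist
      _ ≤ Metric.hausdorffDist (S n) F + dist t (∑ i ∈ Finset.range n, x i) := by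
            exact add_le_add_left
              (Metric.infDist_le_hausdorffDist_of_mem (hs n) (hed n)) _
      _ = _ := add_comm _ _
    have hlim : Filter.Tendsto
        (fun n => dist t (∑ i ∈ Finset.range n, x i) + Metric.hausdorffDist (S n) F)
        Filter.atTop (nhds 0) := by
      have h1 : Filter.Tendsto (fun n => dist t (∑ i ∈ Finset.range n, x i))
          Filter.atTop (nhds 0) := by
        have := Filter.Tendsto.dist (tendsto_const_nhds (x := t) (f := Filter.atTop)) hxt
        simpa using this
      simpa using h1.add hT
    have h0 : Metric.infDist t F ≤ 0 :=
      ge_of_tendsto hlim (Filter.Eventually.of_forall hineq)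
    have heq : Metric.infDist t F = 0 := le_antisymm h0 Metric.infDist_nonneg
    exact (hFc.isClosed.mem_iff_infDist_zero hFne).2 heq
  have hIoo : Set.Ioo lo hi ⊆ interior F := by
    rw [← interior_Icc]
    exact interior_mono hIcc
  exact Set.Nonempty.mono hIoo (Set.nonempty_Ioo.2 hlt)

end MeagerEmptyInteriorAux

theorem meager_empty_interior (a : ℕ → ℝ) (hsum : Summable (fun i => |a i|))
    (ε : ℝ) (hε : 0 < ε) (hratio : ∀ᶠ i in Filter.atTop, ε < |a (i + 1)| / |a i|) :
    IsMeagre {K : KIcc |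
      ∃ F : Set ℝ, IsCompact F ∧ F.Nonempty ∧
        Filter.Tendsto
          (fun n => Metric.hausdorffDist
            (∑ i ∈ Finset.range n, a i • ((K.1 : Set ℝ) ^ i)) F)
          Filter.atTop (nhds 0) ∧
        interior F = ∅} := by
  classical
  obtain ⟨N₀, hN₀⟩ := Filter.eventually_atTop.1 hratio
  set N := max N₀ 1 with hNdef
  have hN1 : 1 ≤ N := le_max_right _ _
  have hrat : ∀ i, N ≤ i → ε < |a (i+1)| / |a i| := fun i hi =>
    hN₀ i (le_trans (le_max_left _ _) hi)
  set U : Set KIcc := {K | ∃ c m δ, MeagerEmptyInteriorAux.Cond ε c m δ (K.1 : Set ℝ)}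
    with hU
  -- openness
  have hW : IsOpen {L : TopologicalSpace.NonemptyCompacts ℝ |
      ∃ c m δ, MeagerEmptyInteriorAux.Cond ε c m δ (L : Set ℝ)} := by
    rw [Metric.isOpen_iff]
    rintro L ⟨c, m, δ, hδ, hc, hcm, hm1, hkey, ⟨k, hkL, hk⟩, hthick⟩
    obtain ⟨hk1, hk2⟩ := hk
    have hcm' : c ≤ m := by linarith
    have hcont : Continuous fun y : ℝ => Metric.infDist y (L : Set ℝ) :=
      Metric.continuous_infDist_pt _
    obtain ⟨y₀, hy₀, hy₀max⟩ := (isCompact_Icc (a := c) (b := m)).exists_isMaxOn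
      ⟨c, le_refl c, hcm'⟩ hcont.continuousOn
    have hv : Metric.infDist y₀ (L : Set ℝ) < δ := by
      obtain ⟨z, hz, hdz⟩ := Metric.mem_thickening_iff.1 (hthick hy₀)
      exact lt_of_le_of_lt (Metric.infDist_le_dist_of_mem hz) hdz
    set r : ℝ := min (min (k - (m - δ)) (m + δ - k)) (δ - Metric.infDist y₀ (L : Set ℝ))
      with hrdef
    have hrpos : 0 < r := by
      apply lt_min (lt_min (by linarith) (by linarith)) (by linarith)
    refine ⟨r, hrpos, ?_⟩
    intro L' hL'
    rw [Metric.mem_ball, Metric.NonemptyCompacts.dist_eq] at hL'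
    have hL'2 : Metric.hausdorffDist (L : Set ℝ) (L' : Set ℝ) < r := by
      rw [Metric.hausdorffDist_comm]; exact hL'
    have hedist : EMetric.hausdorffEdist (L : Set ℝ) (L' : Set ℝ) ≠ ⊤ :=
      Metric.hausdorffEdist_ne_top_of_nonempty_of_bounded L.nonempty L'.nonempty
        L.isCompact.isBounded L'.isCompact.isBounded
    refine ⟨c, m, δ, hδ, hc, hcm, hm1, hkey, ?_, ?_⟩
    · have h1 : Metric.infDist k (L' : Set ℝ) < min (k - (m - δ)) (m + δ - k) :=
        lt_of_le_of_lt (Metric.infDist_le_hausdorffDist_of_mem hkL hedist)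
          (lt_of_lt_of_le hL'2 (min_le_left _ _))
      obtain ⟨k', hk'L, hk'd⟩ := (Metric.infDist_lt_iff L'.nonempty).1 h1
      rw [Real.dist_eq] at hk'd
      obtain ⟨hd1, hd2⟩ := abs_lt.1 (lt_of_lt_of_le hk'd (min_le_left _ _))
      obtain ⟨hd3, hd4⟩ := abs_lt.1 (lt_of_lt_of_le hk'd (min_le_right _ _))
      exact ⟨k', hk'L, by constructor <;> linarith⟩
    · intro y hy
      have h3 : Metric.infDist y (L' : Set ℝ) ≤
          Metric.infDist y (L : Set ℝ) + Metric.hausdorffDist (L : Set ℝ) (L' : Set ℝ) :=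
        Metric.infDist_le_infDist_add_hausdorffDist hedist
      have h4 : Metric.infDist y (L : Set ℝ) ≤ Metric.infDist y₀ (L : Set ℝ) := hy₀max hy
      have h5 : Metric.infDist y (L' : Set ℝ) < δ := by
        have h6 : r ≤ δ - Metric.infDist y₀ (L : Set ℝ) := min_le_right _ _
        linarith
      rw [Metric.mem_thickening_iff]
      exact (Metric.infDist_lt_iff L'.nonempty).1 h5
  have hUopen : IsOpen U := hW.preimage continuous_subtype_val
  -- density
  have hUdense : Dense U := by
    rw [dense_iff_inter_open]
    rintro O hO ⟨K, hKO⟩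
    replace hO := isOpen_induced_iff.1 hO
    obtain ⟨O', hO', rfl⟩ := hO
    obtain ⟨r, hrpos, hball⟩ := Metric.isOpen_iff.1 hO' K.1 hKO
    obtain ⟨p, hp⟩ := K.1.nonempty
    have hp0 : 0 ≤ p := (K.2 hp).1
    have hp1 : p ≤ 1 := (K.2 hp).2
    set s : ℝ := min r 1 with hsdef
    have hs0 : 0 < s := lt_min hrpos one_pos
    have hs_r : s ≤ r := min_le_left _ _
    have hs1 : s ≤ 1 := min_le_right _ _
    set m : ℝ := min (p + s/4) 1 with hmdef
    have hm_ge : s/4 ≤ m := le_min (by linarith) (by linarith)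
    have hm_pos : 0 < m := by linarith
    have hm1 : m ≤ 1 := min_le_right _ _
    have hpm : p ≤ m := le_min (by linarith) hp1
    have hmp : m ≤ p + s/4 := min_le_left _ _
    set c : ℝ := m - s/8 with hcdef
    have hc : 0 < c := by
      rw [hcdef]; linarith
    set δ : ℝ := min (s/64) (ε*m*s/192) with hδdef
    have hδpos : 0 < δ := lt_min (by linarith) (by positivity)
    have hδ1 : δ ≤ s/64 := min_le_left _ _
    have hδ2 : δ ≤ ε*m*s/192 := min_le_right _ _
    have hcm : c + 3*δ ≤ m := by
      rw [hcdef]; linarith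
    clear_value s m c δ
    have hkey : 6*δ ≤ ε*(m-δ)*(m-c-2*δ) := by
      have hs4m : s ≤ 4*m := by linarith
      have hA : m/2 ≤ m - δ := by linarith
      have hB : 3*s/32 ≤ m - c - 2*δ := by
        rw [hcdef]; linarith
      have hprod : (m/2) * (3*s/32) ≤ (m - δ) * (m - c - 2*δ) :=
        mul_le_mul hA hB (by linarith) (by linarith)
      nlinarith [mul_le_mul_of_nonneg_left hprod hε.le,
        mul_nonneg (mul_nonneg hε.le hm_pos.le) hs0.le]
    set Kset : Set ℝ := (K.1 : Set ℝ) ∪ Set.Icc c m with hKset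
    have hKcomp : IsCompact Kset := K.1.isCompact.union isCompact_Icc
    have hKsne : Kset.Nonempty := ⟨p, Or.inl hp⟩
    have hsub01 : Kset ⊆ Set.Icc 0 1 :=
      Set.union_subset K.2 (Set.Icc_subset_Icc hc.le hm1)
    set K' : KIcc := ⟨⟨⟨Kset, hKcomp⟩, hKsne⟩, hsub01⟩ with hK'
    have hdistK : Metric.hausdorffDist Kset (K.1 : Set ℝ) < r := by
      have hle : Metric.hausdorffDist Kset (K.1 : Set ℝ) ≤ s/2 := by
        apply Metric.hausdorffDist_le_of_infDist (by linarith)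
        · rintro x (hx|hx)
          · rw [Metric.infDist_zero_of_mem hx]; linarith
          · refine le_trans (Metric.infDist_le_dist_of_mem hp) ?_
            rw [Real.dist_eq]
            have h1 : x ≤ m := hx.2
            have h2 : c ≤ x := hx.1
            rw [abs_le]
            constructor
            · rw [hcdef] at h2; linarith
            · linarith
        · intro y hy
          have hyK : y ∈ Kset := Or.inl hy
          rw [Metric.infDist_zero_of_mem hyK]
          linarith
      linarith
    refine ⟨K', ?_, c, m, δ, hδpos, hc, hcm, hm1, hkey, ?_, ?_⟩
    · apply hball
      rw [Metric.mem_ball, Metric.NonemptyCompacts.dist_eq]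
      exact hdistK
    · exact ⟨m, Or.inr ⟨by linarith, le_rfl⟩, by constructor <;> [linarith; linarith]⟩
    · intro y hy
      exact Metric.self_subset_thickening hδpos Kset (Or.inr hy)
  -- assembly
  have hUres : U ∈ residual KIcc := residual_of_dense_open hUopen hUdense
  refine Filter.mem_of_superset hUres ?_
  intro K hKU hKbad
  obtain ⟨F, hFc, hFne, hT, hFint⟩ := hKbad
  obtain ⟨c, m, δ, hcond⟩ := hKU
  have hne := MeagerEmptyInteriorAux.sound a hsum ε hε N hN1 hrat c m δ
    (K.1 : Set ℝ) K.2 K.1.nonempty hcond F hFc hFne hT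
  rw [hFint] at hne
  exact Set.not_nonempty_empty hne
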